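/- For the entanglement witness W = I/d − Φ_+ on C^d ⊗ C^d, the generalized robustness of entanglement satisfies R^s_G(ρ) ≥ d·Tr[ρ Φ_+] − 1 for any state ρ with Tr[ρΦ_+] ≥ 1/d; in particular this follows from R^s_G(ρ) ≥ |Tr[W ρ]|/λ_max where λ_max = 1/d is the largest eigenvalue of W. -/

import Mathlib

open Matrix
open scoped Kronecker ComplexOrder

/-- A density matrix: positive semidefinite with unit trace. -/
def IsDensity {n : Type*} [Fintype n] [DecidableEq n] (ρ : Matrix n n ℂ) : Prop :=
  ρ.PosSemidef ∧ ρ.trace = 1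

/-- A bipartite state is separable if it is a convex combination of product states. -/
def IsSepState (d : ℕ) (ρ : Matrix (Fin d × Fin d) (Fin d × Fin d) ℂ) : Prop :=
  ∃ (m : ℕ) (p : Fin m → ℝ) (A B : Fin m → Matrix (Fin d) (Fin d) ℂ),
    (∀ i, 0 ≤ p i) ∧ (∑ i, p i = 1) ∧ (∀ i, IsDensity (A i) ∧ IsDensity (B i)) ∧
    ρ = ∑ i, (p i : ℂ) • (A i ⊗ₖ B i)

/-- The maximally entangled state `|Φ₊⟩ = (1/√d) ∑ |jj⟩` as a vector. -/
noncomputable def bellPlus (d : ℕ) : Fin d × Fin d → ℂ :=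
  fun p => if p.1 = p.2 then (1 / Real.sqrt d : ℝ) else 0

/-- The projector onto the maximally entangled state. -/
noncomputable def bellProj (d : ℕ) : Matrix (Fin d × Fin d) (Fin d × Fin d) ℂ :=
  Matrix.vecMulVec (bellPlus d) (star (bellPlus d))

/-- Feasible set for the generalized robustness of entanglement of a state. -/
def genRobustnessSet (d : ℕ) (ρ : Matrix (Fin d × Fin d) (Fin d × Fin d) ℂ) : Set ℝ :=
  {t : ℝ | 0 ≤ t ∧ ∃ σ : Matrix (Fin d × Fin d) (Fin d × Fin d) ℂ,
    IsDensity σ ∧ IsSepState d ((((1 + t : ℝ)) : ℂ)⁻¹ • (ρ + ((t : ℝ) : ℂ) • σ))}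

/- ### Auxiliary lemmas -/

lemma trace_mul_vecMulVec' {n : Type*} [Fintype n] (M : Matrix n n ℂ) (v w : n → ℂ) :
    (M * vecMulVec v w).trace = w ⬝ᵥ (M *ᵥ v) := by
  simp only [trace, diag, mul_apply, vecMulVec_apply, dotProduct, mulVec, Finset.mul_sum]
  congr 1; ext i; congr 1; ext j; ring

lemma trace_nonneg_of_posSemidef' {n : Type*} [Fintype n] [DecidableEq n]
    {M : Matrix n n ℂ} (hM : M.PosSemidef) : 0 ≤ M.trace := by
  apply Finset.sum_nonneg
  intro i _
  have := hM.dotProduct_mulVec_nonneg (Pi.single i 1)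
  simpa [dotProduct, mulVec, Pi.single_apply] using this

open scoped MatrixOrder Matrix.Norms.L2Operator in
lemma trace_mul_nonneg' {n : Type*} [Fintype n] [DecidableEq n]
    {A C : Matrix n n ℂ} (hA : A.PosSemidef) (hC : C.PosSemidef) : 0 ≤ (A * C).trace := by
  obtain ⟨B, rfl⟩ := CStarAlgebra.nonneg_iff_eq_star_mul_self.mp hA.nonneg
  rw [← Matrix.trace_mul_cycle]
  exact trace_nonneg_of_posSemidef' (hC.mul_mul_conjTranspose_same B)

lemma density_eigenvalues_sum' {n : Type*} [Fintype n] [DecidableEq n]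
    {C : Matrix n n ℂ} (hC : C.PosSemidef) (ht : C.trace = 1) :
    ∑ i, hC.1.eigenvalues i = 1 := by
  have h := congrArg Matrix.trace hC.1.spectral_theorem
  rw [ht, Unitary.conjStarAlgAut_apply, Matrix.trace_mul_cycle] at h
  rw [(Matrix.mem_unitaryGroup_iff').mp (hC.1.eigenvectorUnitary).2, Matrix.one_mul,
    Matrix.trace_diagonal] at h
  simp only [Function.comp_apply] at h
  have : ((∑ i, hC.1.eigenvalues i : ℝ) : ℂ) = 1 := by
    push_cast
    rw [h]; rfl
  exact_mod_cast this

lemma one_sub_density_posSemidef' {n : Type*} [Fintype n] [DecidableEq n]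
    {C : Matrix n n ℂ} (hC : C.PosSemidef) (ht : C.trace = 1) : (1 - C).PosSemidef := by
  have hsum := density_eigenvalues_sum' hC ht
  have hle : ∀ i, hC.1.eigenvalues i ≤ 1 := by
    intro i
    rw [← hsum]
    exact Finset.single_le_sum (fun j _ => hC.eigenvalues_nonneg j) (Finset.mem_univ i)
  set U : Matrix n n ℂ := (hC.1.eigenvectorUnitary : Matrix n n ℂ) with hU
  have hUU : U * star U = 1 := (Matrix.mem_unitaryGroup_iff).mp hC.1.eigenvectorUnitary.2
  have key : (1 - C) = U * (1 - diagonal (RCLike.ofReal ∘ hC.1.eigenvalues)) * star U := by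
    have hs : C = U * diagonal (RCLike.ofReal ∘ hC.1.eigenvalues) * star U := hC.1.spectral_theorem
    rw [Matrix.mul_sub, Matrix.mul_one, Matrix.sub_mul, hUU, ← hs]
  rw [key]
  have : (1 - diagonal (RCLike.ofReal ∘ hC.1.eigenvalues) : Matrix n n ℂ)
      = diagonal (fun i => ((1 - hC.1.eigenvalues i : ℝ) : ℂ)) := by
    rw [← diagonal_one, diagonal_sub]
    ext i j
    rcases eq_or_ne i j with rfl | hij
    · simp [diagonal]
    · simp [diagonal, hij]
  rw [this]
  exact (Matrix.PosSemidef.diagonal (fun i => by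
    simpa using Complex.zero_le_real.mpr (sub_nonneg.mpr (hle i)))).mul_mul_conjTranspose_same U

lemma trace_mul_le_one' {n : Type*} [Fintype n] [DecidableEq n]
    {A C : Matrix n n ℂ} (hA : A.PosSemidef) (hAt : A.trace = 1)
    (hC : C.PosSemidef) (hCt : C.trace = 1) : ((A * C).trace).re ≤ 1 := by
  have h := trace_mul_nonneg' hA (one_sub_density_posSemidef' hC hCt)
  rw [Matrix.mul_sub, Matrix.mul_one, trace_sub, hAt] at h
  have := (Complex.le_def.mp h).1
  simp only [Complex.zero_re, Complex.sub_re, Complex.one_re] at this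
  linarith

lemma kron_bell_trace' (d : ℕ) (A B : Matrix (Fin d) (Fin d) ℂ) :
    ((A ⊗ₖ B) * bellProj d).trace = ((1 / d : ℝ) : ℂ) * ∑ i, ∑ j, A i j * B i j := by
  have hs : ((1 / Real.sqrt d : ℝ) : ℂ) * ((1 / Real.sqrt d : ℝ) : ℂ) = ((1 / d : ℝ) : ℂ) := by
    rw [← Complex.ofReal_mul]
    congr 1
    rw [div_mul_div_comm, one_mul, Real.mul_self_sqrt (Nat.cast_nonneg d)]
  rw [bellProj, trace_mul_vecMulVec']
  simp only [dotProduct, mulVec, bellPlus, Pi.star_apply, Fintype.sum_prod_type,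
    kroneckerMap_apply, mul_ite, mul_zero, ite_mul, zero_mul, Finset.sum_ite_eq,
    Finset.sum_ite_eq', Finset.mem_univ, if_true, apply_ite (star : ℂ → ℂ), star_zero,
    Complex.star_def, Complex.conj_ofReal, map_zero, Finset.mul_sum, Finset.sum_mul]
  conv_lhs => rw [Finset.sum_congr rfl
    (fun x _ => Finset.sum_comm (s := Finset.univ) (t := Finset.univ))]
  simp only [Finset.sum_ite_eq, Finset.mem_univ, if_true]
  congr 1; ext i; congr 1; ext j
  rw [← hs]; ring

/-- For density matrices `A, B`, `∑ᵢⱼ Aᵢⱼ Bᵢⱼ = Tr[A Bᵀ]` has real part at most 1. -/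
lemma sum_entries_le_one' (d : ℕ) {A B : Matrix (Fin d) (Fin d) ℂ}
    (hA : IsDensity A) (hB : IsDensity B) :
    ((∑ i, ∑ j, A i j * B i j)).re ≤ 1 := by
  have hsum : (∑ i, ∑ j, A i j * B i j) = (A * Bᵀ).trace := by
    simp only [trace, diag, mul_apply, transpose_apply]
  rw [hsum]
  exact trace_mul_le_one' hA.1 hA.2 hB.1.transpose (by rw [trace_transpose]; exact hB.2)

/-- A separable state has fidelity with the Bell state at most `1/d`. -/
lemma sep_bell_fidelity' (d : ℕ) {τ : Matrix (Fin d × Fin d) (Fin d × Fin d) ℂ}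
    (hτ : IsSepState d τ) : ((τ * bellProj d).trace).re ≤ 1 / d := by
  obtain ⟨m, p, A, B, hp, hps, hAB, rfl⟩ := hτ
  rw [Finset.sum_mul, trace_sum]
  have : ∀ i, (((p i : ℂ) • (A i ⊗ₖ B i) * bellProj d).trace).re ≤ p i * (1 / d) := by
    intro i
    rw [smul_mul_assoc, trace_smul, smul_eq_mul, kron_bell_trace' d]
    rw [show ((p i : ℝ) : ℂ) * (((1 / d : ℝ) : ℂ) * ∑ k, ∑ j, A i k j * B i k j)
        = ((p i * (1 / d) : ℝ) : ℂ) * ∑ k, ∑ j, A i k j * B i k j by push_cast; ring]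
    rw [Complex.re_ofReal_mul]
    have h1 := sum_entries_le_one' d (hAB i).1 (hAB i).2
    have hpd : 0 ≤ p i * (1 / d) := mul_nonneg (hp i) (by positivity)
    nlinarith
  calc (∑ i, ((p i : ℂ) • (A i ⊗ₖ B i) * bellProj d).trace).re
      = ∑ i, (((p i : ℂ) • (A i ⊗ₖ B i) * bellProj d).trace).re := by
        rw [Complex.re_sum]
    _ ≤ ∑ i, p i * (1 / d) := Finset.sum_le_sum (fun i _ => this i)
    _ = 1 / d := by rw [← Finset.sum_mul, hps, one_mul]

/-- Any state has nonnegative fidelity with the Bell state. -/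
lemma bell_fidelity_nonneg' (d : ℕ) {σ : Matrix (Fin d × Fin d) (Fin d × Fin d) ℂ}
    (hσ : σ.PosSemidef) : 0 ≤ ((σ * bellProj d).trace).re := by
  rw [bellProj, trace_mul_vecMulVec']
  exact (Complex.le_def.mp (hσ.dotProduct_mulVec_nonneg (bellPlus d))).1

/-- the generalized robustness of entanglement is lower bounded via
the witness `W = I/d − Φ₊`: `R^s_G(ρ) ≥ d·Tr[ρΦ₊] − 1`. -/
theorem gen_robustness_lower_bound (d : ℕ) (hd : 2 ≤ d)
    (ρ : Matrix (Fin d × Fin d) (Fin d × Fin d) ℂ) (hρ : IsDensity ρ)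
    (hfid : (1 : ℝ) / d ≤ ((ρ * bellProj d).trace).re)
    (hne : (genRobustnessSet d ρ).Nonempty) :
    (d : ℝ) * ((ρ * bellProj d).trace).re - 1 ≤ sInf (genRobustnessSet d ρ) := by
  apply le_csInf hne
  rintro t ⟨ht0, σ, hσ, hsep⟩
  have hd0 : (0 : ℝ) < d := by positivity
  have ht1 : (0 : ℝ) < 1 + t := by linarith
  have hτ := sep_bell_fidelity' d hsep
  have hkey : ((((1 + t : ℝ) : ℂ)⁻¹ • (ρ + ((t : ℝ) : ℂ) • σ) * bellProj d).trace).re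
      = (1 + t)⁻¹ * (((ρ * bellProj d).trace).re + t * ((σ * bellProj d).trace).re) := by
    rw [smul_mul_assoc, add_mul, smul_mul_assoc, trace_smul, trace_add, trace_smul,
      smul_eq_mul, smul_eq_mul, ← Complex.ofReal_inv, Complex.re_ofReal_mul, Complex.add_re,
      Complex.re_ofReal_mul]
  rw [hkey] at hτ
  have hs := bell_fidelity_nonneg' d hσ.1
  set F := ((ρ * bellProj d).trace).re
  set s := ((σ * bellProj d).trace).re
  rw [inv_mul_le_iff₀ ht1] at hτ
  have hts : 0 ≤ t * s := mul_nonneg ht0 hs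
  have : F ≤ (1 + t) * (1 / d) := by linarith
  have hdf : d * F ≤ 1 + t := by
    have := mul_le_mul_of_nonneg_left this (le_of_lt hd0)
    calc (d : ℝ) * F ≤ d * ((1 + t) * (1 / d)) := this
      _ = 1 + t := by field_simp
  linarith
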